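/- Fix a block size B, a parameter set Θ and, for each dimension N that is a multiple of B (with M = N/B blocks), a family F_{N,ε} of Borel probability measures on ℝ^N satisfying: (i) if ν_B ∈ F_{B,ε}, then the M-fold product measure ν_B × ⋯ × ν_B (viewing ℝ^N as (ℝ^B)^M) belongs to F_{N,ε}; and (ii) if ν_N ∈ F_{N,ε}, then the average of its B-dimensional block marginals ν̄_N = M⁻¹ Σ_{i=1}^M ν_{N,i} belongs to F_{B,ε}. Let η be a block-separable denoiser, i.e. η(x;τ) = (η_B(block₁(x);τ), …, η_B(block_M(x);τ)) for a measurable map η_B(·;τ): ℝ^B → ℝ^B, τ ∈ Θ, where block_m(x) = (x_{(m−1)B+1}, …, x_{mB}). Then for every N that is a multiple of B, M(F_{N,ε}|η) = M(F_{B,ε}|η_B). -/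

import Mathlib

open MeasureTheory ProbabilityTheory ENNReal

noncomputable section

/-- The standard Gaussian measure `N(0, I_B)` on `ℝ^B`. -/
def stdGaussian (B : ℕ) : Measure (Fin B → ℝ) :=
  Measure.pi fun _ => gaussianReal 0 1

instance (B : ℕ) : IsProbabilityMeasure (stdGaussian B) := by
  unfold _root_.stdGaussian; infer_instance

lemma pi_map_eval' {ι : Type*} [Fintype ι] {α : ι → Type*} [∀ i, MeasurableSpace (α i)]
    (μ : ∀ i, Measure (α i)) [∀ i, IsProbabilityMeasure (μ i)] (i : ι) :
    (Measure.pi μ).map (fun x => x i) = μ i := by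
  classical
  ext s hs
  rw [Measure.map_apply (measurable_pi_apply i) hs]
  show Measure.pi μ (Function.eval i ⁻¹' s) = μ i s
  rw [← Set.univ_pi_update_univ, Measure.pi_pi,
    Finset.prod_eq_single i (fun j _ hj => by rw [Function.update_of_ne hj]; exact measure_univ)
      (fun h => absurd (Finset.mem_univ i) h), Function.update_self]

def gfun {Θ : Type*} (B : ℕ) (ηB : Θ → (Fin B → ℝ) → (Fin B → ℝ)) (τ : Θ)
    (p : (Fin B → ℝ) × (Fin B → ℝ)) : ℝ≥0∞ :=
  ENNReal.ofReal (∑ j, (p.1 j - ηB τ (fun j' => p.1 j' + p.2 j') j) ^ 2)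

def Hfun {Θ : Type*} (B : ℕ) (ηB : Θ → (Fin B → ℝ) → (Fin B → ℝ)) (τ : Θ)
    (x : Fin B → ℝ) : ℝ≥0∞ :=
  ∫⁻ z, gfun B ηB τ (x, z) ∂(stdGaussian B)

lemma gfun_meas {Θ : Type*} (B : ℕ) (ηB : Θ → (Fin B → ℝ) → (Fin B → ℝ))
    (hmeas : ∀ τ : Θ, Measurable (ηB τ)) (τ : Θ) : Measurable (gfun B ηB τ) := by
  apply Measurable.ennreal_ofReal
  apply Finset.measurable_sum
  intro j _
  have hsum : Measurable fun p : (Fin B → ℝ) × (Fin B → ℝ) => (fun j' => p.1 j' + p.2 j') :=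
    measurable_pi_lambda _ fun j' =>
      ((measurable_pi_apply j').comp measurable_fst).add
        ((measurable_pi_apply j').comp measurable_snd)
  exact (((measurable_pi_apply j).comp measurable_fst).sub
    ((measurable_pi_apply j).comp ((hmeas τ).comp hsum))).pow_const 2

lemma key1 {Θ : Type*} (B : ℕ) (ηB : Θ → (Fin B → ℝ) → (Fin B → ℝ))
    (hmeas : ∀ τ : Θ, Measurable (ηB τ)) (τ : Θ) (ν : Measure (Fin B → ℝ)) :
    ∫⁻ p, gfun B ηB τ p ∂(ν.prod (stdGaussian B)) = ∫⁻ x, Hfun B ηB τ x ∂ν :=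
  lintegral_prod _ (gfun_meas B ηB hmeas τ).aemeasurable

lemma keyM {Θ : Type*} (B : ℕ) (ηB : Θ → (Fin B → ℝ) → (Fin B → ℝ))
    (hmeas : ∀ τ : Θ, Measurable (ηB τ)) (τ : Θ) (M : ℕ)
    (ν : Measure (Fin M → Fin B → ℝ)) [IsProbabilityMeasure ν] :
    ∫⁻ p, ∑ m, gfun B ηB τ (p.1 m, p.2 m)
        ∂(ν.prod (Measure.pi fun _ : Fin M => stdGaussian B)) =
    ∑ m : Fin M, ∫⁻ x, Hfun B ηB τ x ∂(ν.map (fun x => x m)) := by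
  set Γ := Measure.pi fun _ : Fin M => stdGaussian B with hΓ
  have hφ : ∀ m : Fin M, Measurable
      (fun p : (Fin M → Fin B → ℝ) × (Fin M → Fin B → ℝ) => (p.1 m, p.2 m)) := fun m =>
    ((measurable_pi_apply m).comp measurable_fst).prodMk
      ((measurable_pi_apply m).comp measurable_snd)
  rw [lintegral_finset_sum (f := fun m (p : (Fin M → Fin B → ℝ) × (Fin M → Fin B → ℝ)) => gfun B ηB τ (p.1 m, p.2 m)) Finset.univ (fun m _ => (gfun_meas B ηB hmeas τ).comp (hφ m))]
  refine Finset.sum_congr rfl fun m _ => ?_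
  have hPm : Measurable (Prod.map (fun x : Fin M → Fin B → ℝ => x m)
      (fun z : Fin M → Fin B → ℝ => z m)) :=
    (measurable_pi_apply m).prodMap (measurable_pi_apply m)
  calc ∫⁻ p, gfun B ηB τ (p.1 m, p.2 m) ∂(ν.prod Γ)
      = ∫⁻ q, gfun B ηB τ q ∂((ν.prod Γ).map (Prod.map (fun x => x m) (fun z => z m))) := by
        rw [lintegral_map (gfun_meas B ηB hmeas τ) hPm]
        rfl
    _ = ∫⁻ q, gfun B ηB τ q ∂((ν.map (fun x => x m)).prod (stdGaussian B)) := by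
        rw [← Measure.map_prod_map _ _ (measurable_pi_apply m) (measurable_pi_apply m), hΓ,
          pi_map_eval' (fun _ : Fin M => stdGaussian B) m]
    _ = ∫⁻ x, Hfun B ηB τ x ∂(ν.map (fun x => x m)) :=
        lintegral_prod _ (gfun_meas B ηB hmeas τ).aemeasurable

/-- **Minimax MSE of a block-separable denoiser.**
We view `ℝ^N` with `N = M*B` as `(ℝ^B)^M`, i.e. as `Fin M → Fin B → ℝ`; the
`m`-th block of `x` is `x m`.  If the family `F M` of probability measures on
`(ℝ^B)^M` contains products of any member of the single-block family `FB` (i),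
and the average of the block marginals of any member of `F M` lies in `FB`
(ii), then for any block-separable denoiser built from `ηB : ℝ^B → ℝ^B` the
minimax MSE in dimension `N = M*B` equals the single-block minimax MSE. -/
theorem block_separable_minimax_mse
    {Θ : Type*} (B : ℕ) (hB : 0 < B)
    (ηB : Θ → (Fin B → ℝ) → (Fin B → ℝ))
    (hmeas : ∀ τ : Θ, Measurable (ηB τ))
    (F : (M : ℕ) → Set (Measure (Fin M → Fin B → ℝ)))
    (FB : Set (Measure (Fin B → ℝ)))
    (hprob : ∀ M : ℕ, ∀ ν ∈ F M, IsProbabilityMeasure ν)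
    (hprobB : ∀ ν ∈ FB, IsProbabilityMeasure ν)
    -- (i) products of a single-block member belong to the `M`-block family
    (hprod : ∀ (M : ℕ) (νB : Measure (Fin B → ℝ)), νB ∈ FB →
      Measure.pi (fun _ : Fin M => νB) ∈ F M)
    -- (ii) the average of the block marginals belongs to the single-block family
    (hmarg : ∀ (M : ℕ), 0 < M → ∀ ν ∈ F M,
      ((M : ℝ≥0∞)⁻¹ • ∑ m : Fin M, Measure.map (fun x => x m) ν) ∈ FB)
    (M : ℕ) (hM : 0 < M) :
    ((M * B : ℕ) : ℝ≥0∞)⁻¹ *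
      ⨅ τ : Θ, ⨆ ν ∈ F M,
        ∫⁻ p, ENNReal.ofReal
            (∑ m, ∑ j, (p.1 m j - ηB τ (fun j' => p.1 m j' + p.2 m j') j) ^ 2)
          ∂(ν.prod (Measure.pi fun _ : Fin M => stdGaussian B)) =
    (B : ℝ≥0∞)⁻¹ *
      ⨅ τ : Θ, ⨆ ν ∈ FB,
        ∫⁻ p, ENNReal.ofReal (∑ j, (p.1 j - ηB τ (fun j' => p.1 j' + p.2 j') j) ^ 2)
          ∂(ν.prod (stdGaussian B)) := by
  classical
  have hMne : (M : ℝ≥0∞) ≠ 0 := Nat.cast_ne_zero.mpr hM.ne'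
  have hMtop : (M : ℝ≥0∞) ≠ ⊤ := natCast_ne_top M
  have hsplit : ∀ (τ : Θ) (p : (Fin M → Fin B → ℝ) × (Fin M → Fin B → ℝ)),
      ENNReal.ofReal (∑ m, ∑ j, (p.1 m j - ηB τ (fun j' => p.1 m j' + p.2 m j') j) ^ 2)
        = ∑ m, gfun B ηB τ (p.1 m, p.2 m) := by
    intro τ p
    rw [ENNReal.ofReal_sum_of_nonneg fun m _ => Finset.sum_nonneg fun j _ => sq_nonneg _]
    rfl
  simp_rw [hsplit]
  have hRHS : ∀ (τ : Θ) (ν : Measure (Fin B → ℝ)),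
      (∫⁻ p, ENNReal.ofReal (∑ j, (p.1 j - ηB τ (fun j' => p.1 j' + p.2 j') j) ^ 2)
          ∂(ν.prod (stdGaussian B))) = ∫⁻ x, Hfun B ηB τ x ∂ν :=
    fun τ ν => key1 B ηB hmeas τ ν
  simp_rw [hRHS]
  have supEq : ∀ τ : Θ,
      (⨆ ν ∈ F M, ∫⁻ p, ∑ m, gfun B ηB τ (p.1 m, p.2 m)
          ∂(ν.prod (Measure.pi fun _ : Fin M => stdGaussian B)))
        = (M : ℝ≥0∞) * ⨆ ν ∈ FB, ∫⁻ x, Hfun B ηB τ x ∂ν := by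
    intro τ
    apply le_antisymm
    · refine iSup₂_le fun ν hν => ?_
      haveI := hprob M ν hν
      rw [keyM B ηB hmeas τ M ν]
      have hbar := hmarg M hM ν hν
      have hEq : (∑ m : Fin M, ∫⁻ x, Hfun B ηB τ x ∂(ν.map (fun x => x m)))
          = (M : ℝ≥0∞) * ∫⁻ x, Hfun B ηB τ x
              ∂((M : ℝ≥0∞)⁻¹ • ∑ m : Fin M, Measure.map (fun x => x m) ν) := by
        rw [lintegral_smul_measure, lintegral_finset_sum_measure, smul_eq_mul, ← mul_assoc,
          ENNReal.mul_inv_cancel hMne hMtop, one_mul]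
      rw [hEq]
      exact mul_le_mul_right
        (le_iSup₂ (f := fun ν (_ : ν ∈ FB) => ∫⁻ x, Hfun B ηB τ x ∂ν) _ hbar) _
    · rw [ENNReal.mul_iSup]
      refine iSup_le fun νB => ?_
      rw [ENNReal.mul_iSup]
      refine iSup_le fun hνB => ?_
      haveI := hprobB νB hνB
      have hkey : ∫⁻ p, ∑ m, gfun B ηB τ (p.1 m, p.2 m)
          ∂((Measure.pi fun _ : Fin M => νB).prod (Measure.pi fun _ : Fin M => stdGaussian B))
          = (M : ℝ≥0∞) * ∫⁻ x, Hfun B ηB τ x ∂νB := by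
        rw [keyM B ηB hmeas τ M _]
        simp_rw [pi_map_eval' (fun _ : Fin M => νB)]
        rw [Finset.sum_const, Finset.card_univ, Fintype.card_fin, nsmul_eq_mul]
      rw [← hkey]
      exact le_iSup₂ (f := fun ν (_ : ν ∈ F M) => ∫⁻ p, ∑ m, gfun B ηB τ (p.1 m, p.2 m)
        ∂(ν.prod (Measure.pi fun _ : Fin M => stdGaussian B))) _ (hprod M νB hνB)
  simp_rw [supEq]
  rw [← ENNReal.mul_iInf_of_ne hMne hMtop, ← mul_assoc]
  congr 1
  rw [Nat.cast_mul, ENNReal.mul_inv (Or.inl hMne) (Or.inl hMtop),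
    mul_comm ((M : ℝ≥0∞))⁻¹ ((B : ℝ≥0∞))⁻¹, mul_assoc,
    ENNReal.inv_mul_cancel hMne hMtop, mul_one]
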